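/- Let f: {0,1}^n → {0,1}, J ⊆ [n], and let f_J be a J-symmetric function closest to f in normalized Hamming distance. Then dist(f, f_J) ≤ SymInf_f(J) ≤ 2·dist(f, f_J). -/

import Mathlib

open Finset

variable {n : ℕ}

/-- `override J x y` is the vector equal to `y` on `J` and `x` elsewhere. -/
def override (J : Finset (Fin n)) (x y : Fin n → Bool) : Fin n → Bool :=
  fun i => if i ∈ J then y i else x i

/-- Influence of the set `J` in `f`. -/
noncomputable def Infl (f : (Fin n → Bool) → Bool) (J : Finset (Fin n)) : ℝ :=
  ((Finset.univ.filter (fun p : (Fin n → Bool) × (Fin n → Bool) =>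
      f p.1 ≠ f (override J p.1 p.2))).card : ℝ) / ((2 ^ n : ℝ) * (2 ^ n : ℝ))

/-- Normalized Hamming distance between Boolean functions. -/
noncomputable def hdist (f g : (Fin n → Bool) → Bool) : ℝ :=
  ((Finset.univ.filter (fun x => f x ≠ g x)).card : ℝ) / (2 ^ n : ℝ)

/-- `g` is a `k`-junta: it depends on at most `k` variables. -/
def IsJunta (k : ℕ) (g : (Fin n → Bool) → Bool) : Prop :=
  ∃ S : Finset (Fin n), S.card ≤ k ∧
    ∀ x y : Fin n → Bool, (∀ i ∈ S, x i = y i) → g x = g y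

/-- The permutations of `[n]` fixing every element outside `J`. -/
def permsOn (J : Finset (Fin n)) : Finset (Equiv.Perm (Fin n)) :=
  Finset.univ.filter (fun π => ∀ i ∉ J, π i = i)

/-- The action of a permutation on a vector: `(π • x)_{π(i)} = x_i`. -/
def permApply (π : Equiv.Perm (Fin n)) (x : Fin n → Bool) : Fin n → Bool :=
  fun j => x (π.symm j)

/-- Symmetric influence of the set `J` in `f`. -/
noncomputable def SymInf (f : (Fin n → Bool) → Bool) (J : Finset (Fin n)) : ℝ :=
  (((Finset.univ ×ˢ permsOn J).filter (fun p : (Fin n → Bool) × Equiv.Perm (Fin n) =>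
      f p.1 ≠ f (permApply p.2 p.1))).card : ℝ) /
    ((2 ^ n : ℝ) * ((permsOn J).card : ℝ))

/-- `f` is `J`-symmetric: invariant under permuting the coordinates in `J`. -/
def JSymmetric (f : (Fin n → Bool) → Bool) (J : Finset (Fin n)) : Prop :=
  ∀ x : Fin n → Bool, ∀ π ∈ permsOn J, f (permApply π x) = f x

/-- `f` is `t`-symmetric: it is `J`-symmetric for some `J` of size at least `t`. -/
def TSymmetric (t : ℕ) (f : (Fin n → Bool) → Bool) : Prop :=
  ∃ J : Finset (Fin n), t ≤ J.card ∧ JSymmetric f J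


section Aux
variable {n : ℕ}

lemma mem_permsOn {J : Finset (Fin n)} {π : Equiv.Perm (Fin n)} :
    π ∈ permsOn J ↔ ∀ i ∉ J, π i = i := by simp [permsOn]

lemma one_mem_permsOn (J : Finset (Fin n)) : (1 : Equiv.Perm (Fin n)) ∈ permsOn J := by
  simp [mem_permsOn]

lemma mul_mem_permsOn {J : Finset (Fin n)} {π σ : Equiv.Perm (Fin n)}
    (hπ : π ∈ permsOn J) (hσ : σ ∈ permsOn J) : π * σ ∈ permsOn J := by
  rw [mem_permsOn] at *
  intro i hi
  simp [Equiv.Perm.mul_apply, hσ i hi, hπ i hi]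

lemma inv_mem_permsOn {J : Finset (Fin n)} {π : Equiv.Perm (Fin n)}
    (hπ : π ∈ permsOn J) : π⁻¹ ∈ permsOn J := by
  rw [mem_permsOn] at *
  intro i hi
  have := hπ i hi
  calc π⁻¹ i = π⁻¹ (π i) := by rw [this]
  _ = i := Equiv.Perm.inv_eq_iff_eq.mpr rfl

lemma permApply_one (x : Fin n → Bool) : permApply 1 x = x := rfl

lemma permApply_mul (π σ : Equiv.Perm (Fin n)) (x : Fin n → Bool) :
    permApply (π * σ) x = permApply π (permApply σ x) := by
  funext j
  simp [permApply, Equiv.Perm.mul_def]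

lemma permApply_inv_cancel (π : Equiv.Perm (Fin n)) (x : Fin n → Bool) :
    permApply π⁻¹ (permApply π x) = x := by
  rw [← permApply_mul, inv_mul_cancel, permApply_one]

lemma permApply_cancel_inv (π : Equiv.Perm (Fin n)) (x : Fin n → Bool) :
    permApply π (permApply π⁻¹ x) = x := by
  rw [← permApply_mul, mul_inv_cancel, permApply_one]

/-- The orbit of `x` under `permsOn J`. -/
def orbF (J : Finset (Fin n)) (x : Fin n → Bool) : Finset (Fin n → Bool) :=
  (permsOn J).image (fun π => permApply π x)

lemma mem_orbF {J : Finset (Fin n)} {x y : Fin n → Bool} :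
    y ∈ orbF J x ↔ ∃ π ∈ permsOn J, permApply π x = y := by
  simp [orbF]

lemma self_mem_orbF (J : Finset (Fin n)) (x : Fin n → Bool) : x ∈ orbF J x :=
  mem_orbF.2 ⟨1, one_mem_permsOn J, permApply_one x⟩

lemma orbF_eq_of_mem {J : Finset (Fin n)} {x y : Fin n → Bool}
    (h : y ∈ orbF J x) : orbF J y = orbF J x := by
  obtain ⟨σ, hσ, hσy⟩ := mem_orbF.1 h
  ext z
  rw [mem_orbF, mem_orbF]
  constructor
  · rintro ⟨π, hπ, rfl⟩
    exact ⟨π * σ, mul_mem_permsOn hπ hσ, by rw [permApply_mul, hσy]⟩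
  · rintro ⟨π, hπ, rfl⟩
    refine ⟨π * σ⁻¹, mul_mem_permsOn hπ (inv_mem_permsOn hσ), ?_⟩
    rw [permApply_mul, ← hσy, permApply_inv_cancel]

lemma fiber_orbF (J : Finset (Fin n)) (x₀ : Fin n → Bool) :
    Finset.univ.filter (fun y => orbF J y = orbF J x₀) = orbF J x₀ := by
  ext y
  simp only [mem_filter, mem_univ, true_and]
  constructor
  · intro h
    rw [← h]; exact self_mem_orbF J y
  · exact orbF_eq_of_mem

/-- The number of `π ∈ permsOn J` sending `x` to `y`. -/
def stab (J : Finset (Fin n)) (x y : Fin n → Bool) : ℕ :=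
  ((permsOn J).filter (fun π => permApply π x = y)).card

lemma stab_const {J : Finset (Fin n)} {x y : Fin n → Bool} (h : y ∈ orbF J x) :
    stab J x y = stab J x x := by
  obtain ⟨σ, hσ, hσy⟩ := mem_orbF.1 h
  refine Finset.card_bij' (fun π _ => σ⁻¹ * π) (fun τ _ => σ * τ) ?_ ?_ ?_ ?_ <;>
    simp only [mem_filter]
  · rintro π ⟨hπ, hπy⟩
    refine ⟨mul_mem_permsOn (inv_mem_permsOn hσ) hπ, ?_⟩
    rw [permApply_mul, hπy, ← hσy, permApply_inv_cancel]
  · rintro τ ⟨hτ, hτx⟩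
    refine ⟨mul_mem_permsOn hσ hτ, ?_⟩
    rw [permApply_mul, hτx, hσy]
  · intro π _; group
  · intro τ _; group

lemma card_permsOn_eq (J : Finset (Fin n)) (x : Fin n → Bool) :
    (permsOn J).card = (orbF J x).card * stab J x x := by
  rw [Finset.card_eq_sum_card_fiberwise
    (f := fun π => permApply π x) (t := orbF J x)
    (fun π hπ => mem_orbF.2 ⟨π, hπ, rfl⟩)]
  trans (∑ _y ∈ orbF J x, stab J x x)
  · exact Finset.sum_congr rfl (fun y hy => stab_const hy)
  · rw [sum_const, smul_eq_mul]

lemma stab_fiber_const {J : Finset (Fin n)} {x₀ x : Fin n → Bool} (h : x ∈ orbF J x₀) :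
    stab J x x = stab J x₀ x₀ := by
  have h1 := card_permsOn_eq J x
  have h2 := card_permsOn_eq J x₀
  rw [orbF_eq_of_mem h] at h1
  have hpos : 0 < (orbF J x₀).card := card_pos.2 ⟨x₀, self_mem_orbF J x₀⟩
  exact Nat.eq_of_mul_eq_mul_left hpos (h1 ▸ h2 ▸ rfl)

/-- Number of `π ∈ permsOn J` with `f (permApply π x) = true`. -/
def aCnt (J : Finset (Fin n)) (f : (Fin n → Bool) → Bool) (x : Fin n → Bool) : ℕ :=
  ((permsOn J).filter (fun π => f (permApply π x) = true)).card

/-- The majority-over-orbit function. -/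
def gMaj (J : Finset (Fin n)) (f : (Fin n → Bool) → Bool) : (Fin n → Bool) → Bool :=
  fun x => decide ((permsOn J).card ≤ 2 * aCnt J f x)

/-- Number of `π ∈ permsOn J` with `f (permApply π x) ≠ f x`. -/
def cCnt (J : Finset (Fin n)) (f : (Fin n → Bool) → Bool) (x : Fin n → Bool) : ℕ :=
  ((permsOn J).filter (fun π => f x ≠ f (permApply π x))).card

lemma aCnt_eq (J : Finset (Fin n)) (f : (Fin n → Bool) → Bool) (x : Fin n → Bool) :
    aCnt J f x = ((orbF J x).filter (fun y => f y = true)).card * stab J x x := by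
  unfold aCnt
  rw [Finset.card_eq_sum_card_fiberwise
    (f := fun π => permApply π x) (t := (orbF J x).filter (fun y => f y = true))
    (fun π hπ => by
      rw [Finset.mem_coe, mem_filter] at hπ ⊢
      exact ⟨mem_orbF.2 ⟨π, hπ.1, rfl⟩, hπ.2⟩)]
  trans (∑ y ∈ (orbF J x).filter (fun y => f y = true), stab J x x)
  · refine Finset.sum_congr rfl (fun y hy => ?_)
    rw [mem_filter] at hy
    rw [filter_filter]
    trans ((permsOn J).filter (fun π => permApply π x = y)).card
    · congr 1
      apply filter_congr
      intro π _
      constructor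
      · exact fun h => h.2
      · intro h; exact ⟨by rw [h]; exact hy.2, h⟩
    · exact stab_const hy.1
  · rw [sum_const, smul_eq_mul]

lemma aCnt_perm {J : Finset (Fin n)} (f : (Fin n → Bool) → Bool) {σ : Equiv.Perm (Fin n)}
    (hσ : σ ∈ permsOn J) (x : Fin n → Bool) :
    aCnt J f (permApply σ x) = aCnt J f x := by
  refine Finset.card_bij' (fun π _ => π * σ) (fun τ _ => τ * σ⁻¹) ?_ ?_ ?_ ?_ <;>
    simp only [mem_filter]
  · rintro π ⟨hπ, hπf⟩
    exact ⟨mul_mem_permsOn hπ hσ, by rw [permApply_mul]; exact hπf⟩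
  · rintro τ ⟨hτ, hτf⟩
    refine ⟨mul_mem_permsOn hτ (inv_mem_permsOn hσ), ?_⟩
    rw [permApply_mul, permApply_inv_cancel]
    exact hτf
  · intro π _; group
  · intro τ _; group

lemma gMaj_symmetric (J : Finset (Fin n)) (f : (Fin n → Bool) → Bool) :
    JSymmetric (gMaj J f) J := by
  intro x π hπ
  unfold gMaj
  rw [aCnt_perm f hπ x]

lemma cCnt_eq (J : Finset (Fin n)) (f : (Fin n → Bool) → Bool) (x : Fin n → Bool) :
    cCnt J f x = if f x = true then (permsOn J).card - aCnt J f x else aCnt J f x := by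
  unfold cCnt aCnt
  split
  · rename_i hfx
    have key : (permsOn J).filter (fun π => f x ≠ f (permApply π x))
        = (permsOn J).filter (fun π => ¬ (f (permApply π x) = true)) := by
      apply filter_congr
      intro π _
      simp [hfx]
    rw [key]
    have := Finset.card_filter_add_card_filter_not
      (s := permsOn J) (p := fun π => f (permApply π x) = true)
    omega
  · rename_i hfx
    have hfx' : f x = false := by simp at hfx; exact hfx
    congr 1
    apply filter_congr
    intro π _
    simp [hfx']

lemma card_filter_prod {α β : Type*} [DecidableEq α] (s : Finset α) (t : Finset β)
    (P : α → β → Prop) [∀ a b, Decidable (P a b)] :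
    ((s ×ˢ t).filter (fun p => P p.1 p.2)).card
      = ∑ x ∈ s, (t.filter (fun y => P x y)).card := by
  rw [Finset.card_eq_sum_card_fiberwise (f := Prod.fst) (t := s)
    (fun p hp => (mem_product.1 (mem_filter.1 hp).1).1)]
  refine Finset.sum_congr rfl (fun x hx => ?_)
  refine Finset.card_bij' (fun p _ => p.2) (fun y _ => (x, y)) ?_ ?_ ?_ ?_
  · intro p hp
    simp only [mem_filter, mem_product] at hp ⊢
    obtain ⟨⟨⟨_, h2⟩, h3⟩, h4⟩ := hp
    rw [← h4]
    exact ⟨h2, h3⟩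
  · intro y hy
    simp only [mem_filter, mem_product] at hy ⊢
    exact ⟨⟨⟨hx, hy.1⟩, hy.2⟩, trivial⟩
  · rintro ⟨a, b⟩ hp
    simp only [mem_filter] at hp
    simp [hp.2]
  · intro y _; rfl

lemma card_filter_prod_snd {α β : Type*} [DecidableEq β] (s : Finset α) (t : Finset β)
    (P : α → β → Prop) [∀ a b, Decidable (P a b)] :
    ((s ×ˢ t).filter (fun p => P p.1 p.2)).card
      = ∑ y ∈ t, (s.filter (fun x => P x y)).card := by
  rw [Finset.card_eq_sum_card_fiberwise (f := Prod.snd) (t := t)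
    (fun p hp => (mem_product.1 (mem_filter.1 hp).1).2)]
  refine Finset.sum_congr rfl (fun y hy => ?_)
  refine Finset.card_bij' (fun p _ => p.1) (fun x _ => (x, y)) ?_ ?_ ?_ ?_
  · intro p hp
    simp only [mem_filter, mem_product] at hp ⊢
    obtain ⟨⟨⟨h1, _⟩, h3⟩, h4⟩ := hp
    rw [← h4]
    exact ⟨h1, h3⟩
  · intro x hxm
    simp only [mem_filter, mem_product] at hxm ⊢
    exact ⟨⟨⟨hxm.1, hy⟩, hxm.2⟩, trivial⟩
  · rintro ⟨a, b⟩ hp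
    simp only [mem_filter] at hp
    simp [hp.2]
  · intro x _; rfl

lemma arith_ineq (s t u : ℕ) (hs : 1 ≤ s) :
    (t + u) * s * (if (t + u) * s ≤ 2 * (t * s) then u else t)
      ≤ t * ((t + u) * s - t * s) + u * (t * s) := by
  have h1 : (t + u) * s - t * s = u * s := by
    rw [add_mul, Nat.add_sub_cancel_left]
  rw [h1]
  split
  · rename_i h
    have h2 : u ≤ t := by nlinarith
    nlinarith [mul_le_mul_left h2 (u * s)]
  · rename_i h
    push_neg at h
    have h2 : t ≤ u := by nlinarith
    nlinarith [mul_le_mul_left h2 (t * s)]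

lemma fiber_ineq (J : Finset (Fin n)) (f : (Fin n → Bool) → Bool) (x₀ : Fin n → Bool) :
    (permsOn J).card * ((orbF J x₀).filter (fun x => f x ≠ gMaj J f x)).card
      ≤ ∑ x ∈ orbF J x₀, cCnt J f x := by
  set F := orbF J x₀ with hF
  set s := stab J x₀ x₀ with hs
  set t := (F.filter (fun y => f y = true)).card with ht
  have hM : (permsOn J).card = F.card * s := card_permsOn_eq J x₀
  have hspos : 1 ≤ s := by
    rw [hs]
    exact card_pos.2 ⟨1, mem_filter.2 ⟨one_mem_permsOn J, permApply_one x₀⟩⟩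
  have htle : t ≤ F.card := card_filter_le _ _
  have haCnt : ∀ x ∈ F, aCnt J f x = t * s := by
    intro x hx
    rw [aCnt_eq, orbF_eq_of_mem hx, stab_fiber_const hx, ← hF, ← hs, ← ht]
  have hgMaj : ∀ x ∈ F, gMaj J f x = decide ((permsOn J).card ≤ 2 * (t * s)) := by
    intro x hx; unfold gMaj; rw [haCnt x hx]
  have hcCnt : ∀ x ∈ F, cCnt J f x
      = if f x = true then (permsOn J).card - t * s else t * s := by
    intro x hx; rw [cCnt_eq, haCnt x hx]
  have hsplit := Finset.card_filter_add_card_filter_not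
      (s := F) (p := fun x => f x = true)
  have hsum : ∑ x ∈ F, cCnt J f x
      = t * ((permsOn J).card - t * s) + (F.card - t) * (t * s) := by
    rw [← Finset.sum_filter_add_sum_filter_not F (fun x => f x = true)]
    congr 1
    · trans (∑ _x ∈ F.filter (fun x => f x = true), ((permsOn J).card - t * s))
      · refine Finset.sum_congr rfl (fun x hx => ?_)
        rw [mem_filter] at hx
        rw [hcCnt x hx.1, if_pos hx.2]
      · rw [sum_const, smul_eq_mul, ← ht]
    · trans (∑ _x ∈ F.filter (fun x => ¬ (f x = true)), t * s)
      · refine Finset.sum_congr rfl (fun x hx => ?_)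
        rw [mem_filter] at hx
        rw [hcCnt x hx.1, if_neg hx.2]
      · rw [sum_const, smul_eq_mul]
        congr 1
        omega
  have hmis : (F.filter (fun x => f x ≠ gMaj J f x)).card
      = if (permsOn J).card ≤ 2 * (t * s) then F.card - t else t := by
    split
    · rename_i h
      have heq : F.filter (fun x => f x ≠ gMaj J f x)
          = F.filter (fun x => ¬ (f x = true)) := by
        apply filter_congr
        intro x hx
        rw [hgMaj x hx]
        simp [h]
      rw [heq]
      omega
    · rename_i h
      have heq : F.filter (fun x => f x ≠ gMaj J f x)
          = F.filter (fun x => f x = true) := by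
        apply filter_congr
        intro x hx
        rw [hgMaj x hx]
        simp [h]
      rw [heq, ← ht]
  rw [hsum, hmis, hM]
  obtain ⟨u, hu⟩ : ∃ u, F.card = t + u := ⟨F.card - t, by omega⟩
  rw [hu]
  have h2 : t + u - t = u := by omega
  rw [h2]
  exact arith_ineq s t u hspos

lemma global_ineq (J : Finset (Fin n)) (f : (Fin n → Bool) → Bool) :
    (permsOn J).card * (Finset.univ.filter (fun x => f x ≠ gMaj J f x)).card
      ≤ ∑ x : Fin n → Bool, cCnt J f x := by
  classical
  rw [Finset.card_eq_sum_card_fiberwise (f := orbF J) (t := Finset.univ.image (orbF J))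
      (fun x _ => mem_image_of_mem _ (mem_univ x)),
     ← Finset.sum_fiberwise_of_maps_to (g := orbF J) (t := Finset.univ.image (orbF J))
      (fun x _ => mem_image_of_mem _ (mem_univ x)) (cCnt J f),
     Finset.mul_sum]
  refine Finset.sum_le_sum (fun k hk => ?_)
  obtain ⟨x₀, -, rfl⟩ := mem_image.1 hk
  have hset : (Finset.univ.filter (fun x => f x ≠ gMaj J f x)).filter
        (fun x => orbF J x = orbF J x₀)
      = (orbF J x₀).filter (fun x => f x ≠ gMaj J f x) := by
    ext y
    simp only [mem_filter, mem_univ, true_and]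
    constructor
    · rintro ⟨hfg, horb⟩
      exact ⟨by rw [← horb]; exact self_mem_orbF J y, hfg⟩
    · rintro ⟨hmem, hfg⟩
      exact ⟨hfg, orbF_eq_of_mem hmem⟩
  rw [hset]
  calc (permsOn J).card * ((orbF J x₀).filter (fun x => f x ≠ gMaj J f x)).card
      ≤ ∑ x ∈ orbF J x₀, cCnt J f x := fiber_ineq J f x₀
    _ = ∑ x ∈ Finset.univ.filter (fun y => orbF J y = orbF J x₀), cCnt J f x := by
        rw [fiber_orbF]

end Aux


/-- the symmetric influence of `J` is within a factor `2` of the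
distance from `f` to the closest `J`-symmetric function. -/
theorem symInf_vs_dist_to_closest_Jsymmetric (n : ℕ)
    (f fJ : (Fin n → Bool) → Bool) (J : Finset (Fin n))
    (hsymm : JSymmetric fJ J)
    (hclosest : ∀ g : (Fin n → Bool) → Bool, JSymmetric g J → hdist f fJ ≤ hdist f g) :
    hdist f fJ ≤ SymInf f J ∧ SymInf f J ≤ 2 * hdist f fJ := by
  classical
  have hMpos : 0 < (permsOn J).card := card_pos.2 ⟨1, one_mem_permsOn J⟩
  have hN : (0:ℝ) < (2:ℝ) ^ n := by positivity
  have hM : (0:ℝ) < ((permsOn J).card : ℝ) := by exact_mod_cast hMpos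
  set C : ℕ := ((Finset.univ ×ˢ permsOn J).filter
      (fun p : (Fin n → Bool) × Equiv.Perm (Fin n) =>
        f p.1 ≠ f (permApply p.2 p.1))).card with hC
  constructor
  · -- lower bound : hdist f fJ ≤ SymInf f J
    have hDgC : (permsOn J).card
          * (Finset.univ.filter (fun x => f x ≠ gMaj J f x)).card ≤ C := by
      rw [hC, card_filter_prod Finset.univ (permsOn J)
        (fun x π => f x ≠ f (permApply π x))]
      exact global_ineq J f
    have step1 : hdist f fJ ≤ hdist f (gMaj J f) :=
      hclosest (gMaj J f) (gMaj_symmetric J f)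
    refine le_trans step1 ?_
    unfold hdist SymInf
    rw [div_le_div_iff₀ hN (by positivity)]
    have hcast : ((permsOn J).card : ℝ)
          * ((Finset.univ.filter (fun x => f x ≠ gMaj J f x)).card : ℝ) ≤ (C : ℝ) := by
      exact_mod_cast hDgC
    nlinarith [hcast, hN.le, hM.le]
  · -- upper bound
    set D : ℕ := (Finset.univ.filter (fun x => f x ≠ fJ x)).card with hD
    have hCle : C ≤ (permsOn J).card * D + (permsOn J).card * D := by
      have hsub : (Finset.univ ×ˢ permsOn J).filter
            (fun p : (Fin n → Bool) × Equiv.Perm (Fin n) => f p.1 ≠ f (permApply p.2 p.1))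
          ⊆ ((Finset.univ ×ˢ permsOn J).filter
              (fun p : (Fin n → Bool) × Equiv.Perm (Fin n) => f p.1 ≠ fJ p.1))
            ∪ ((Finset.univ ×ˢ permsOn J).filter
              (fun p : (Fin n → Bool) × Equiv.Perm (Fin n) =>
                f (permApply p.2 p.1) ≠ fJ (permApply p.2 p.1))) := by
        intro p hp
        rw [mem_filter] at hp
        rw [mem_union, mem_filter, mem_filter]
        by_contra hcon
        push_neg at hcon
        obtain ⟨h1, h2⟩ := hcon
        have e1 : f p.1 = fJ p.1 := h1 hp.1
        have e2 : f (permApply p.2 p.1) = fJ (permApply p.2 p.1) := h2 hp.1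
        have hG : p.2 ∈ permsOn J := (mem_product.1 hp.1).2
        have e3 : fJ (permApply p.2 p.1) = fJ p.1 := hsymm p.1 p.2 hG
        exact hp.2 (by rw [e1, e2, e3])
      have hcard1 : ((Finset.univ ×ˢ permsOn J).filter
            (fun p : (Fin n → Bool) × Equiv.Perm (Fin n) => f p.1 ≠ fJ p.1)).card
          = (permsOn J).card * D := by
        rw [card_filter_prod Finset.univ (permsOn J) (fun x _ => f x ≠ fJ x)]
        trans (∑ x : Fin n → Bool, if f x ≠ fJ x then (permsOn J).card else 0)
        · refine Finset.sum_congr rfl (fun x _ => ?_)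
          split
          · rename_i h
            rw [filter_true_of_mem (fun _ _ => h)]
          · rename_i h
            rw [filter_false_of_mem (fun _ _ => h), card_empty]
        · rw [Finset.sum_ite, Finset.sum_const, Finset.sum_const_zero, add_zero,
            smul_eq_mul, hD, mul_comm]
      have hcard2 : ((Finset.univ ×ˢ permsOn J).filter
            (fun p : (Fin n → Bool) × Equiv.Perm (Fin n) =>
              f (permApply p.2 p.1) ≠ fJ (permApply p.2 p.1))).card
          = (permsOn J).card * D := by
        rw [card_filter_prod_snd Finset.univ (permsOn J)
          (fun x π => f (permApply π x) ≠ fJ (permApply π x))]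
        trans (∑ _π ∈ permsOn J, D)
        · refine Finset.sum_congr rfl (fun π hπ => ?_)
          rw [hD]
          refine Finset.card_bij' (fun x _ => permApply π x) (fun y _ => permApply π⁻¹ y)
            ?_ ?_ ?_ ?_
          · intro x hx
            rw [mem_filter] at hx ⊢
            exact ⟨mem_univ _, hx.2⟩
          · intro y hy
            rw [mem_filter] at hy ⊢
            refine ⟨mem_univ _, ?_⟩
            rw [permApply_cancel_inv]
            exact hy.2
          · intro x _
            exact permApply_inv_cancel π x
          · intro y _
            exact permApply_cancel_inv π y
        · rw [sum_const, smul_eq_mul]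
      calc C ≤ _ := Finset.card_le_card hsub
        _ ≤ _ := Finset.card_union_le _ _
        _ = (permsOn J).card * D + (permsOn J).card * D := by rw [hcard1, hcard2]
    unfold hdist SymInf
    rw [mul_div_assoc', div_le_div_iff₀ (by positivity) hN]
    have hcast : (C : ℝ) ≤ ((permsOn J).card : ℝ) * (D : ℝ) + ((permsOn J).card : ℝ) * (D : ℝ) := by
      exact_mod_cast hCle
    nlinarith [hcast, hN.le, hM.le]
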